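/- arXiv:2602.19760 — 4 statements merged into one kernel-verified Lean document; each statement's English description precedes it below -/
import Mathlib

section
/- For every real p with 1 < p ≤ 8, the quantity ((p+2)/p) · ((p+1)(p+2))^{-1/p} · 4^{1/p} · (1 - 2^{-p}) is strictly less than 1. -/
open Real

lemma pow_le_exp' (x : ℝ) (n : ℕ) (hn : (n:ℝ) ≠ 0) (hc : 0 ≤ 1 + x/n) :
    (1 + x/n)^n ≤ Real.exp x := by
  calc (1 + x/n)^n ≤ (Real.exp (x/n))^n := by
        apply pow_le_pow_left₀ hc
        have := Real.add_one_le_exp (x/n); linarith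
    _ = Real.exp x := by
        rw [← Real.exp_nat_mul]; congr 1; field_simp

lemma log_le_num (x c : ℝ) (n : ℕ) (hn : (n:ℝ) ≠ 0) (hx : 0 < x)
    (hc : 0 ≤ 1 + c/n) (h : x ≤ (1 + c/n)^n) : Real.log x ≤ c := by
  rw [Real.log_le_iff_le_exp hx]
  exact h.trans (pow_le_exp' c n hn hc)

lemma le_log_num (x d : ℝ) (n : ℕ) (hn : (n:ℝ) ≠ 0) (hd : 0 < 1 - d/n)
    (h : 1 ≤ (1 - d/n)^n * x) : d ≤ Real.log x := by
  have hpow : 0 < (1 - d/n)^n := pow_pos hd n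
  have hx : 0 < x := by nlinarith
  rw [Real.le_log_iff_exp_le hx]
  have h2 : (1 - d/n)^n ≤ Real.exp (-d) := by
    have h3 := pow_le_exp' (-d) n hn (by rw [neg_div]; linarith)
    rw [neg_div, ← sub_eq_add_neg] at h3; exact h3
  have := Real.exp_pos (-d)
  have hed : Real.exp d = (Real.exp (-d))⁻¹ := by rw [← Real.exp_neg, neg_neg]
  rw [hed]
  rw [inv_le_iff_one_le_mul₀ this]  -- guess name
  calc (1:ℝ) ≤ (1 - d/n)^n * x := h
    _ ≤ Real.exp (-d) * x := by nlinarith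
    _ = x * Real.exp (-d) := mul_comm _ _

lemma log_tangent (x a : ℝ) (hx : 0 < x) (ha : 0 < a) :
    Real.log x ≤ Real.log a + x/a - 1 := by
  have h := Real.log_le_sub_one_of_pos (show 0 < x/a by positivity)
  rw [Real.log_div hx.ne' ha.ne'] at h
  linarith

lemma exp_tangent (x a : ℝ) : Real.exp a * (1 + x - a) ≤ Real.exp x := by
  have h := Real.add_one_le_exp (x - a)
  calc Real.exp a * (1 + x - a) ≤ Real.exp a * Real.exp (x - a) :=
        mul_le_mul_of_nonneg_left (by linarith) (Real.exp_pos a).le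
    _ = Real.exp x := by rw [← Real.exp_add]; congr 1; ring

lemma seclem (p b : ℝ) (hp : 0 < p) (hpb : p ≤ b) :
    p * Real.log ((p+2)/p) ≤ b * Real.log ((b+2)/b) := by
  have hb : 0 < b := lt_of_lt_of_le hp hpb
  have hs : (0:ℝ) < (b+2)/b := by positivity
  have ht : (0:ℝ) < (p+2)/p := by positivity
  -- e1 : log t ≤ log s + (t - s)/s
  have e1 : Real.log ((p+2)/p) ≤ Real.log ((b+2)/b) + ((p+2)/p - (b+2)/b)/((b+2)/b) := by
    have := log_tangent ((p+2)/p) ((b+2)/b) ht hs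
    have hrw : ((p+2)/p)/((b+2)/b) - 1 = ((p+2)/p - (b+2)/b)/((b+2)/b) := by
      field_simp
    linarith [this, hrw.le, hrw.ge]
  -- e2 : log s ≥ 1 - 1/s  i.e. log s ≥ (s-1)/s
  have e2 : 1 - 1/((b+2)/b) ≤ Real.log ((b+2)/b) := by
    have := log_tangent 1 ((b+2)/b) one_pos hs
    rw [Real.log_one] at this
    linarith
  have key1 : p * (((p+2)/p - (b+2)/b)/((b+2)/b)) = 2*(b-p)/(b+2) := by
    field_simp; ring
  have key2 : 1 - 1/((b+2)/b) = 2/(b+2) := by field_simp; ring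
  rw [key2] at e2
  have e3 : p * Real.log ((p+2)/p) ≤ p * Real.log ((b+2)/b) + 2*(b-p)/(b+2) := by
    nlinarith [e1, key1]
  have e4 : 2*(b-p)/(b+2) ≤ (b-p) * Real.log ((b+2)/b) := by
    have hbp : 0 ≤ b - p := by linarith
    have : (b-p) * (2/(b+2)) ≤ (b-p) * Real.log ((b+2)/b) :=
      mul_le_mul_of_nonneg_left e2 hbp
    calc 2*(b-p)/(b+2) = (b-p) * (2/(b+2)) := by ring
      _ ≤ (b-p) * Real.log ((b+2)/b) := this
  nlinarith [e3, e4]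

lemma rpow_neg_ge (b L r : ℝ) (n : ℕ) (hn : (n:ℝ) ≠ 0) (hb : 0 < b)
    (hL : Real.log 2 ≤ L) (h0 : 0 ≤ 1 - b*L/n) (hr : r ≤ (1 - b*L/n)^n) :
    r ≤ (2:ℝ) ^ (-b) := by
  have hdef : (2:ℝ) ^ (-b) = Real.exp (Real.log 2 * (-b)) :=
    Real.rpow_def_of_pos two_pos _
  have h1 : -(b*L) ≤ Real.log 2 * (-b) := by nlinarith
  have h2 : (1 + (-(b*L))/n)^n ≤ Real.exp (-(b*L)) :=
    pow_le_exp' _ n hn (by rw [neg_div]; linarith)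
  rw [neg_div, ← sub_eq_add_neg] at h2
  have h3 := Real.exp_le_exp.2 h1
  rw [hdef]
  linarith

lemma key_interval (p a b r c1 c2 d : ℝ)
    (h1a : 1 ≤ a) (hap : a ≤ p) (hpb : p ≤ b)
    (hr0 : 0 < r) (hrb : r ≤ (2:ℝ) ^ (-b))
    (hc1 : Real.log ((b+2)/b) ≤ c1)
    (hc2 : Real.log (1 - r) ≤ c2) (hc2n : c2 < 0)
    (hd : d ≤ Real.log ((a+1)*(a+2)))
    (hnum : b*c1 + a*c2 - d + 1.3862943616 < 0) :
    p * Real.log ((p+2)/p) + p * Real.log (1 - 2^(-p))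
      - Real.log ((p+1)*(p+2)) + Real.log 4 < 0 := by
  have hp0 : 0 < p := by linarith
  have hb0 : 0 < b := by linarith
  -- term 1
  have T1 : p * Real.log ((p+2)/p) ≤ b * c1 := by
    calc p * Real.log ((p+2)/p) ≤ b * Real.log ((b+2)/b) := seclem p b hp0 hpb
      _ ≤ b * c1 := mul_le_mul_of_nonneg_left hc1 hb0.le
  -- term 2
  have h2pb : (2:ℝ)^(-b) ≤ (2:ℝ)^(-p) :=
    Real.rpow_le_rpow_of_exponent_le one_le_two (by linarith)
  have h2p1 : (2:ℝ)^(-p) < 1 :=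
    Real.rpow_lt_one_of_one_lt_of_neg one_lt_two (by linarith)
  have hpos : 0 < 1 - (2:ℝ)^(-p) := by linarith
  have T2 : p * Real.log (1 - 2^(-p)) ≤ a * c2 := by
    have l1 : Real.log (1 - 2^(-p)) ≤ Real.log (1 - r) := by
      apply Real.log_le_log hpos
      linarith [hrb.trans h2pb]
    have l2 : Real.log (1 - 2^(-p)) ≤ c2 := l1.trans hc2
    calc p * Real.log (1 - 2^(-p)) ≤ p * c2 := mul_le_mul_of_nonneg_left l2 hp0.le
      _ ≤ a * c2 := mul_le_mul_of_nonpos_right hap hc2n.le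
  -- term 3
  have T3 : d ≤ Real.log ((p+1)*(p+2)) := by
    refine hd.trans (Real.log_le_log (by nlinarith) (by nlinarith))
  -- log 4
  have T4 : Real.log 4 < 1.3862943616 := by
    have : (4:ℝ) = 2*2 := by norm_num
    rw [this, Real.log_mul two_ne_zero two_ne_zero]
    have := Real.log_two_lt_d9
    norm_num at this ⊢
    linarith
  linarith

set_option maxHeartbeats 1000000 in
theorem stmt7 (p : ℝ) (hp1 : 1 < p) (hp8 : p ≤ 8) :
    ((p + 2) / p) * ((p + 1) * (p + 2)) ^ (-(1 : ℝ) / p) * 4 ^ (1 / p) *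
        (1 - 2 ^ (-p)) < 1 := by
  have hp0 : 0 < p := by linarith
  have h2p1 : (2:ℝ)^(-p) < 1 :=
    Real.rpow_lt_one_of_one_lt_of_neg one_lt_two (by linarith)
  have hBpos : 0 < 1 - (2:ℝ)^(-p) := by linarith
  have hApos : 0 < (p+2)/p := by positivity
  have hCpos : 0 < (p+1)*(p+2) := by nlinarith
  have key : p * Real.log ((p+2)/p) + p * Real.log (1 - 2^(-p))
      - Real.log ((p+1)*(p+2)) + Real.log 4 < 0 := by
    rcases le_or_gt p (13/10) with hcase | hcase
    · -- tangent case 1 < p ≤ 1.3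
      have L2pos : 0 < Real.log 2 := Real.log_pos one_lt_two
      have l2u : Real.log 2 < 6931471808/10^10 := by
        have h := Real.log_two_lt_d9
        norm_num at h ⊢
        linarith
      have l3u : Real.log 3 ≤ Real.log 2 + 21/50 := by
        have hdiv : Real.log 3 - Real.log 2 = Real.log (3/2) :=
          (Real.log_div (by norm_num) (by norm_num)).symm
        have h := log_le_num (3/2) (21/50) 10 (by norm_num) (by norm_num)
          (by norm_num) (by norm_num)
        linarith
      have t1 := log_tangent ((p+2)/p) 3 hApos (by norm_num)
      have m1 : p * Real.log ((p+2)/p) ≤ p * Real.log 3 + (p+2)/3 - p := by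
        have h := mul_le_mul_of_nonneg_left t1 hp0.le
        have heq : p * (Real.log 3 + ((p+2)/p)/3 - 1)
            = p * Real.log 3 + (p+2)/3 - p := by field_simp
        linarith
      have t2 := log_tangent (1 - 2^(-p)) (1/2) hBpos (by norm_num)
      have lhalf : Real.log ((1:ℝ)/2) = -Real.log 2 := by
        rw [one_div, Real.log_inv]
      have m2 : p * Real.log (1 - 2^(-p))
          ≤ p * (1 - Real.log 2 - 2 * 2^(-p)) := by
        rw [lhalf] at t2
        have hdd : (1 - (2:ℝ)^(-p))/(1/2) = 2*(1 - 2^(-p)) := by ring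
        rw [hdd] at t2
        have : Real.log (1 - 2^(-p)) ≤ 1 - Real.log 2 - 2 * 2^(-p) := by linarith
        exact mul_le_mul_of_nonneg_left this hp0.le
      have hdef : (2:ℝ)^(-p) = Real.exp (Real.log 2 * (-p)) :=
        Real.rpow_def_of_pos two_pos _
      have he : Real.exp (-Real.log 2) = 1/2 := by
        rw [Real.exp_neg, Real.exp_log two_pos]
        norm_num
      have h3 : (1/2)*(1 - (p-1)*Real.log 2) ≤ (2:ℝ)^(-p) := by
        have h := exp_tangent (Real.log 2 * (-p)) (-Real.log 2)
        rw [he] at h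
        rw [hdef]
        calc (1/2)*(1 - (p-1)*Real.log 2)
            = 1/2 * (1 + Real.log 2 * (-p) - (-Real.log 2)) := by ring
          _ ≤ _ := h
      have m3 : p * (1 - (p-1)*Real.log 2) ≤ 2 * (p * 2^(-p)) := by
        have h := mul_le_mul_of_nonneg_left h3 (by positivity : (0:ℝ) ≤ 2*p)
        nlinarith [h]
      have t4 := log_tangent 2 (p+1) (by norm_num) (by linarith)
      have t5 := log_tangent 3 (p+2) (by norm_num) (by linarith)
      have hb1 : 2/(p+1) ≤ 1 - (p-1)*(10/23) := by
        rw [div_le_iff₀ (by linarith)]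
        nlinarith [mul_nonneg (by linarith : (0:ℝ) ≤ p-1)
          (by linarith : (0:ℝ) ≤ 13/10 - p)]
      have hb2 : 3/(p+2) ≤ 1 - (p-1)*(10/33) := by
        rw [div_le_iff₀ (by linarith)]
        nlinarith [mul_nonneg (by linarith : (0:ℝ) ≤ p-1)
          (by linarith : (0:ℝ) ≤ 13/10 - p)]
      have lsplit : Real.log ((p+1)*(p+2)) = Real.log (p+1) + Real.log (p+2) :=
        Real.log_mul (by linarith) (by linarith)
      have l4 : Real.log 4 = 2 * Real.log 2 := by
        rw [show (4:ℝ) = 2*2 by norm_num, Real.log_mul two_ne_zero two_ne_zero]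
        ring
      have final : (p-1)*Real.log 3 + (2-2*p)/3 + (p-1)^2*Real.log 2
          - (p-1)*(10/23) - (p-1)*(10/33) < 0 := by
        nlinarith [mul_nonneg (mul_nonneg (by linarith : (0:ℝ) ≤ p-1)
            (by linarith : (0:ℝ) ≤ 13/10 - p)) L2pos.le,
          mul_pos (by linarith : (0:ℝ) < p-1)
            (by linarith : (0:ℝ) < 6931471808/10^10 - Real.log 2),
          mul_nonneg (by linarith : (0:ℝ) ≤ p-1)
            (by linarith : (0:ℝ) ≤ Real.log 2 + 21/50 - Real.log 3)]
      rw [lsplit, l4]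
      linarith [m1, m2, m3, t4, t5, hb1, hb2, final]
    · -- interval cases, 1.3 < p ≤ 8
      rcases le_or_gt p (139/100) with hb | ha0
      · exact key_interval p (13/10) (139/100) (95169/250000) (89353/100000) (-47713/100000) (202383/100000)
          (by norm_num) (by linarith) hb (by norm_num)
          (rpow_neg_ge (139/100) 0.6931471808 (95169/250000) 200 (by norm_num) (by norm_num)
            (le_of_lt Real.log_two_lt_d9) (by norm_num) (by norm_num))
          (log_le_num _ _ 200 (by norm_num) (by norm_num) (by norm_num) (by norm_num))
          (log_le_num _ _ 100 (by norm_num) (by norm_num) (by norm_num) (by norm_num))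
          (by norm_num)
          (le_log_num _ _ 800 (by norm_num) (by norm_num)
            (by rw [show (800:ℕ) = 200*4 by norm_num, pow_mul]; norm_num))
          (by norm_num)
      rcases le_or_gt p (151/100) with hb | ha1
      · exact key_interval p (139/100) (151/100) (350147/1000000) (84551/100000) (-42901/100000) (13057/6250)
          (by norm_num) (by linarith) hb (by norm_num)
          (rpow_neg_ge (151/100) 0.6931471808 (350147/1000000) 200 (by norm_num) (by norm_num)
            (le_of_lt Real.log_two_lt_d9) (by norm_num) (by norm_num))
          (log_le_num _ _ 200 (by norm_num) (by norm_num) (by norm_num) (by norm_num))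
          (log_le_num _ _ 50 (by norm_num) (by norm_num) (by norm_num) (by norm_num))
          (by norm_num)
          (le_log_num _ _ 800 (by norm_num) (by norm_num)
            (by rw [show (800:ℕ) = 200*4 by norm_num, pow_mul]; norm_num))
          (by norm_num)
      rcases le_or_gt p (17/10) with hb | ha2
      · exact key_interval p (151/100) (17/10) (153357/500000) (7797/10000) (-36431/100000) (21729/10000)
          (by norm_num) (by linarith) hb (by norm_num)
          (rpow_neg_ge (17/10) 0.6931471808 (153357/500000) 200 (by norm_num) (by norm_num)
            (le_of_lt Real.log_two_lt_d9) (by norm_num) (by norm_num))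
          (log_le_num _ _ 200 (by norm_num) (by norm_num) (by norm_num) (by norm_num))
          (log_le_num _ _ 50 (by norm_num) (by norm_num) (by norm_num) (by norm_num))
          (by norm_num)
          (le_log_num _ _ 800 (by norm_num) (by norm_num)
            (by rw [show (800:ℕ) = 200*4 by norm_num, pow_mul]; norm_num))
          (by norm_num)
      rcases le_or_gt p (99/50) with hb | ha3
      · exact key_interval p (17/10) (99/50) (252293/1000000) (35009/50000) (-14437/50000) (114779/50000)
          (by norm_num) (by linarith) hb (by norm_num)
          (rpow_neg_ge (99/50) 0.6931471808 (252293/1000000) 200 (by norm_num) (by norm_num)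
            (le_of_lt Real.log_two_lt_d9) (by norm_num) (by norm_num))
          (log_le_num _ _ 200 (by norm_num) (by norm_num) (by norm_num) (by norm_num))
          (log_le_num _ _ 50 (by norm_num) (by norm_num) (by norm_num) (by norm_num))
          (by norm_num)
          (le_log_num _ _ 800 (by norm_num) (by norm_num)
            (by rw [show (800:ℕ) = 200*4 by norm_num, pow_mul]; norm_num))
          (by norm_num)
      rcases le_or_gt p (12/5) with hb | ha4
      · exact key_interval p (99/50) (12/5) (3763/20000) (30407/50000) (-5161/25000) (246721/100000)
          (by norm_num) (by linarith) hb (by norm_num)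
          (rpow_neg_ge (12/5) 0.6931471808 (3763/20000) 200 (by norm_num) (by norm_num)
            (le_of_lt Real.log_two_lt_d9) (by norm_num) (by norm_num))
          (log_le_num _ _ 100 (by norm_num) (by norm_num) (by norm_num) (by norm_num))
          (log_le_num _ _ 50 (by norm_num) (by norm_num) (by norm_num) (by norm_num))
          (by norm_num)
          (le_log_num _ _ 800 (by norm_num) (by norm_num)
            (by rw [show (800:ℕ) = 200*4 by norm_num, pow_mul]; norm_num))
          (by norm_num)
      rcases le_or_gt p (79/25) with hb | ha5
      · exact key_interval p (12/5) (79/25) (55267/500000) (12309/25000) (-11513/100000) (134969/50000)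
          (by norm_num) (by linarith) hb (by norm_num)
          (rpow_neg_ge (79/25) 0.6931471808 (55267/500000) 200 (by norm_num) (by norm_num)
            (le_of_lt Real.log_two_lt_d9) (by norm_num) (by norm_num))
          (log_le_num _ _ 100 (by norm_num) (by norm_num) (by norm_num) (by norm_num))
          (log_le_num _ _ 50 (by norm_num) (by norm_num) (by norm_num) (by norm_num))
          (by norm_num)
          (le_log_num _ _ 800 (by norm_num) (by norm_num)
            (by rw [show (800:ℕ) = 200*4 by norm_num, pow_mul]; norm_num))
          (by norm_num)
      rcases le_or_gt p (141/25) with hb | ha6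
      · exact key_interval p (79/25) (141/25) (19291/1000000) (30551/100000) (-437/25000) (61209/20000)
          (by norm_num) (by linarith) hb (by norm_num)
          (rpow_neg_ge (141/25) 0.6931471808 (19291/1000000) 200 (by norm_num) (by norm_num)
            (le_of_lt Real.log_two_lt_d9) (by norm_num) (by norm_num))
          (log_le_num _ _ 50 (by norm_num) (by norm_num) (by norm_num) (by norm_num))
          (log_le_num _ _ 50 (by norm_num) (by norm_num) (by norm_num) (by norm_num))
          (by norm_num)
          (le_log_num _ _ 800 (by norm_num) (by norm_num)
            (by rw [show (800:ℕ) = 200*4 by norm_num, pow_mul]; norm_num))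
          (by norm_num)
      have hb : p ≤ 8 := hp8
      exact key_interval p (141/25) 8 (3611/1000000) (11257/50000) (-81/50000) (391451/100000)
          (by norm_num) (by linarith) hb (by norm_num)
          (rpow_neg_ge 8 0.6931471808 (3611/1000000) 200 (by norm_num) (by norm_num)
            (le_of_lt Real.log_two_lt_d9) (by norm_num) (by norm_num))
          (log_le_num _ _ 50 (by norm_num) (by norm_num) (by norm_num) (by norm_num))
          (log_le_num _ _ 50 (by norm_num) (by norm_num) (by norm_num) (by norm_num))
          (by norm_num)
          (le_log_num _ _ 800 (by norm_num) (by norm_num)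
            (by rw [show (800:ℕ) = 200*4 by norm_num, pow_mul]; norm_num))
          (by norm_num)
  -- reduction from key to the statement
  have e1 : ((p+1)*(p+2) : ℝ) ^ (-(1:ℝ)/p)
      = Real.exp (Real.log ((p+1)*(p+2)) * (-(1:ℝ)/p)) :=
    Real.rpow_def_of_pos hCpos _
  have e2 : (4:ℝ) ^ ((1:ℝ)/p) = Real.exp (Real.log 4 * (1/p)) :=
    Real.rpow_def_of_pos (by norm_num) _
  calc ((p + 2) / p) * ((p + 1) * (p + 2)) ^ (-(1 : ℝ) / p) * 4 ^ (1/p) *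
        (1 - 2 ^ (-p))
      = Real.exp (Real.log ((p+2)/p) + Real.log ((p+1)*(p+2)) * (-(1:ℝ)/p)
          + Real.log 4 * (1/p) + Real.log (1 - 2^(-p))) := by
        rw [Real.exp_add, Real.exp_add, Real.exp_add, ← e1, ← e2,
          Real.exp_log hApos, Real.exp_log hBpos]
    _ < 1 := by
        rw [Real.exp_lt_one_iff]
        have heq : Real.log ((p+2)/p) + Real.log ((p+1)*(p+2)) * (-(1:ℝ)/p)
            + Real.log 4 * (1/p) + Real.log (1 - 2^(-p))
            = (p * Real.log ((p+2)/p) + p * Real.log (1 - 2^(-p))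
              - Real.log ((p+1)*(p+2)) + Real.log 4) / p := by
          field_simp; ring
        rw [heq]
        exact div_neg_of_neg_of_pos key hp0
end

section
/- For every real p ≥ 11 and every a > 0, one has log((p+2)/p) + log(1 - e^{-2a}) + (log 2 - log(p+2) - log a)/p < 0; equivalently, G_p(a) := ((p+2)/p)(1 - e^{-2a})(2/((p+2)a))^{1/p} < 1. -/
open Real

-- log y ≤ (y - 1/y)/2 for y ≥ 1, via t ≤ sinh t
lemma log_le_half_sub_inv {y : ℝ} (hy : 1 ≤ y) : Real.log y ≤ (y - y⁻¹) / 2 := by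
  have hy0 : (0:ℝ) < y := lt_of_lt_of_le one_pos hy
  have ht : 0 ≤ Real.log y := Real.log_nonneg hy
  have hs : Real.log y ≤ Real.sinh (Real.log y) := Real.self_le_sinh_iff.mpr ht
  rwa [Real.sinh_eq, Real.exp_log hy0, Real.exp_neg, Real.exp_log hy0] at hs

-- numeric: 24/13 < log(13/2)
lemma num1 : (24:ℝ)/13 < Real.log (13/2) := by
  have h1 : Real.exp 1 ^ (24:ℕ) < (2.7182818286:ℝ) ^ (24:ℕ) :=
    pow_lt_pow_left₀ Real.exp_one_lt_d9 (Real.exp_pos 1).le (by norm_num)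
  have h2 : (2.7182818286:ℝ) ^ (24:ℕ) < ((13:ℝ)/2) ^ (13:ℕ) := by norm_num
  have h3 : Real.exp (24:ℝ) < ((13:ℝ)/2) ^ (13:ℕ) := by
    have := Real.exp_one_pow 24
    rw [show ((24:ℕ):ℝ) = (24:ℝ) by norm_num] at this
    linarith [h1, h2]
  have h4 : Real.log (Real.exp 24) < Real.log (((13:ℝ)/2) ^ (13:ℕ)) :=
    Real.log_lt_log (Real.exp_pos _) h3
  rw [Real.log_exp, Real.log_pow] at h4
  push_cast at h4
  linarith

-- numeric: 1 - exp(-2) < 0.864665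
lemma num2 : 1 - Real.exp (-2) < 0.864665 := by
  have he2 : Real.exp 2 < 7.3890561 := by
    have h1 : Real.exp 2 = Real.exp 1 * Real.exp 1 := by
      rw [← Real.exp_add]; norm_num
    nlinarith [Real.exp_one_lt_d9, Real.exp_pos 1]
  have hpos : (0:ℝ) < Real.exp 2 := Real.exp_pos 2
  have : (0.135335:ℝ) < Real.exp (-2) := by
    rw [Real.exp_neg]
    rw [lt_inv_comm₀ (by norm_num) hpos]
    calc Real.exp 2 < 7.3890561 := he2
      _ < 0.135335⁻¹ := by norm_num
  linarith

-- numeric: 11 * log(0.864665) + log 4 < 0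
lemma num3 : 11 * Real.log 0.864665 + Real.log 4 < 0 := by
  have h : Real.log ((0.864665:ℝ) ^ (11:ℕ) * 4) < 0 := by
    apply Real.log_neg
    · positivity
    · norm_num
  rw [Real.log_mul (by positivity) (by norm_num), Real.log_pow] at h
  push_cast at h
  linarith

theorem stmt10 (p : ℝ) (hp : 11 ≤ p) (a : ℝ) (ha : 0 < a) :
    Real.log ((p + 2) / p) + Real.log (1 - Real.exp (-2 * a)) +
        (Real.log 2 - Real.log (p + 2) - Real.log a) / p < 0 ∧
      ((p + 2) / p) * (1 - Real.exp (-2 * a)) * (2 / ((p + 2) * a)) ^ (1 / p) < 1 := by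
  have hp0 : (0:ℝ) < p := by linarith
  have hq0 : (0:ℝ) < p + 2 := by linarith
  -- 1 - exp(-2a) ∈ (0,1)
  have hE1 : Real.exp (-2 * a) < 1 := by
    rw [Real.exp_lt_one_iff]; nlinarith
  have hE0 : 0 < 1 - Real.exp (-2 * a) := by linarith
  have hEl1 : 1 - Real.exp (-2 * a) < 1 := by
    have := Real.exp_pos (-2 * a); linarith
  set L := Real.log (1 - Real.exp (-2 * a)) with hLdef
  have hLneg : L < 0 := Real.log_neg hE0 hEl1
  -- bound p * log((p+2)/p) ≤ (2p+2)/(p+2)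
  have hy1 : (1:ℝ) ≤ (p + 2) / p := by
    rw [le_div_iff₀ hp0]; linarith
  have hlogy : Real.log ((p + 2) / p) ≤ ((p + 2) / p - ((p + 2) / p)⁻¹) / 2 :=
    log_le_half_sub_inv hy1
  have hyinv : ((p + 2) / p)⁻¹ = p / (p + 2) := by
    rw [inv_div]
  have hA : p * Real.log ((p + 2) / p) ≤ (2 * p + 2) / (p + 2) := by
    rw [hyinv] at hlogy
    have h2 : p * Real.log ((p + 2) / p) ≤ p * (((p + 2) / p - p / (p + 2)) / 2) :=
      mul_le_mul_of_nonneg_left hlogy hp0.le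
    have h3 : p * (((p + 2) / p - p / (p + 2)) / 2) = (2 * p + 2) / (p + 2) := by
      field_simp; ring
    linarith
  -- C(p) := log((p+2)/2) + 2/(p+2) - 2 > 0
  have hlog13 : Real.log ((p + 2) / 2) = Real.log ((p + 2) / 13) + Real.log (13 / 2) := by
    rw [← Real.log_mul (by positivity) (by norm_num)]
    congr 1
    ring
  have hlb : 1 - 13 / (p + 2) ≤ Real.log ((p + 2) / 13) := by
    have h1 : Real.log (13 / (p + 2)) ≤ 13 / (p + 2) - 1 :=
      Real.log_le_sub_one_of_pos (by positivity)
    have h2 : Real.log (13 / (p + 2)) = - Real.log ((p + 2) / 13) := by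
      rw [← Real.log_inv, inv_div]
    linarith
  have hfrac : (11:ℝ) / (p + 2) ≤ 11 / 13 := by
    apply div_le_div_of_nonneg_left (by norm_num) (by norm_num) (by linarith)
  have hC : 0 < Real.log ((p + 2) / 2) + 2 / (p + 2) - 2 := by
    have := num1
    have h5 : 1 - 13 / (p + 2) + 2 / (p + 2) = 1 - 11 / (p + 2) := by ring
    nlinarith
  -- main inequality in multiplied form
  have hlogdiv : Real.log 2 - Real.log (p + 2) = - Real.log ((p + 2) / 2) := by
    rw [Real.log_div hq0.ne' (by norm_num)]; ring
  have hT : p * Real.log ((p + 2) / p) + p * L + (Real.log 2 - Real.log (p + 2) - Real.log a) < 0 := by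
    have hA' : p * Real.log ((p + 2) / p) + Real.log 2 - Real.log (p + 2) ≤
        2 - 2 / (p + 2) - Real.log ((p + 2) / 2) := by
      have : (2 * p + 2) / (p + 2) = 2 - 2 / (p + 2) := by field_simp; ring
      linarith [hA, hlogdiv, this.ge]
    rcases le_or_gt 1 a with h1a | h1a
    · -- a ≥ 1 : p*L < 0, log a ≥ 0
      have hpL : p * L < 0 := mul_neg_of_pos_of_neg hp0 hLneg
      have hla : 0 ≤ Real.log a := Real.log_nonneg h1a
      linarith
    rcases le_or_gt (1/4 : ℝ) a with h4a | h4a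
    · -- 1/4 ≤ a < 1
      have hmono : 1 - Real.exp (-2 * a) ≤ 1 - Real.exp (-2) := by
        have : Real.exp (-2) ≤ Real.exp (-2 * a) := Real.exp_le_exp.mpr (by nlinarith)
        linarith
      have hLle : L ≤ Real.log 0.864665 := by
        apply le_trans (Real.log_le_log hE0 hmono)
        exact (Real.log_le_log (by nlinarith [Real.exp_pos (-2:ℝ), num2]) num2.le)
      have hpL : p * L ≤ 11 * Real.log 0.864665 := by
        calc p * L ≤ 11 * L := mul_le_mul_of_nonpos_right hp hLneg.le
          _ ≤ 11 * Real.log 0.864665 := by linarith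
      have hla : Real.log (1/4) ≤ Real.log a := Real.log_le_log (by norm_num) h4a
      have h14 : Real.log (1/4 : ℝ) = - Real.log 4 := by
        rw [← Real.log_inv]; norm_num
      have := num3
      linarith
    · -- a < 1/4 : 1 - exp(-2a) ≤ 2a
      have h2a : 1 - Real.exp (-2 * a) ≤ 2 * a := by
        have := Real.add_one_le_exp (-2 * a); linarith
      have hL2a : L ≤ Real.log 2 + Real.log a := by
        have := Real.log_le_log hE0 h2a
        rwa [Real.log_mul (by norm_num) ha.ne'] at this
      have hlog2 : 0 < Real.log 2 := Real.log_pos (by norm_num)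
      have hla : Real.log a < -(2 * Real.log 2) := by
        have h1 : Real.log a < Real.log (1/4) := Real.log_lt_log ha h4a
        have h14 : Real.log (1/4 : ℝ) = -(2 * Real.log 2) := by
          rw [show (1/4 : ℝ) = (2:ℝ)⁻¹ * (2:ℝ)⁻¹ by norm_num,
            Real.log_mul (by norm_num) (by norm_num), Real.log_inv]
          ring
        linarith
      have hpL : p * L ≤ p * (Real.log 2 + Real.log a) :=
        mul_le_mul_of_nonneg_left hL2a hp0.le
      have hmul : (p - 1) * Real.log a < (p - 1) * (-(2 * Real.log 2)) :=
        mul_lt_mul_of_pos_left hla (by linarith)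
      have hmul2 : (2 - p) * Real.log 2 ≤ -9 * Real.log 2 :=
        mul_le_mul_of_nonneg_right (by linarith) hlog2.le
      have hexp : p * (Real.log 2 + Real.log a) =
          p * Real.log 2 + (p - 1) * Real.log a + Real.log a := by ring
      have hmul3 : (p - 1) * (-(2 * Real.log 2)) = (2 - p) * Real.log 2 - p * Real.log 2 := by ring
      linarith
  -- conclude first part
  have hfirst : Real.log ((p + 2) / p) + L + (Real.log 2 - Real.log (p + 2) - Real.log a) / p < 0 := by
    have heq : Real.log ((p + 2) / p) + L + (Real.log 2 - Real.log (p + 2) - Real.log a) / p =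
        (p * Real.log ((p + 2) / p) + p * L + (Real.log 2 - Real.log (p + 2) - Real.log a)) / p := by
      field_simp
    rw [heq]
    exact div_neg_of_neg_of_pos hT hp0
  refine ⟨hfirst, ?_⟩
  -- second part from first
  have hG0 : 0 < ((p + 2) / p) * (1 - Real.exp (-2 * a)) * (2 / ((p + 2) * a)) ^ (1 / p) := by
    apply mul_pos (mul_pos (by positivity) hE0)
    exact Real.rpow_pos_of_pos (by positivity) _
  have hlogG : Real.log (((p + 2) / p) * (1 - Real.exp (-2 * a)) * (2 / ((p + 2) * a)) ^ (1 / p)) =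
      Real.log ((p + 2) / p) + L + (Real.log 2 - Real.log (p + 2) - Real.log a) / p := by
    have e1 : Real.log (2 / ((p + 2) * a)) = Real.log 2 - Real.log (p + 2) - Real.log a := by
      rw [Real.log_div (by norm_num) (by positivity), Real.log_mul hq0.ne' ha.ne']
      ring
    rw [Real.log_mul (by positivity) (Real.rpow_pos_of_pos (by positivity) _).ne',
      Real.log_mul (by positivity) hE0.ne',
      Real.log_rpow (by positivity), e1]
    ring
  have := hfirst
  rw [← hlogG] at this
  calc ((p + 2) / p) * (1 - Real.exp (-2 * a)) * (2 / ((p + 2) * a)) ^ (1 / p)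
      = Real.exp (Real.log (((p + 2) / p) * (1 - Real.exp (-2 * a)) * (2 / ((p + 2) * a)) ^ (1 / p))) := (Real.exp_log hG0).symm
    _ < Real.exp 0 := Real.exp_lt_exp.mpr this
    _ = 1 := Real.exp_zero
end

section
/- For every real p with 8 < p < 11, one has ((p-1)(p+2)/p)^{1-1/p} · 4^{1/p}/p < 1. -/
open Real

theorem stmt11 (p : ℝ) (hp1 : 8 < p) (hp2 : p < 11) :
    ((p - 1) * (p + 2) / p) ^ (1 - 1 / p) * 4 ^ (1 / p) / p < 1 := by
  have hp0 : (0:ℝ) < p := by linarith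
  set x : ℝ := (p - 1) * (p + 2) / p with hxdef
  have hx0 : 0 < x := div_pos (mul_pos (by linarith) (by linarith)) hp0
  have hxp0 : 0 < x / p := div_pos hx0 hp0
  -- log 4 and log 8 in terms of log 2
  have l4 : Real.log 4 = 2 * Real.log 2 := by
    rw [show (4:ℝ) = 2 ^ 2 by norm_num, Real.log_pow]; push_cast; ring
  have l8 : Real.log 8 = 3 * Real.log 2 := by
    rw [show (8:ℝ) = 2 ^ 3 by norm_num, Real.log_pow]; push_cast; ring
  -- log (x/p) ≤ (p-2)/p^2
  have h1 : Real.log (x / p) ≤ (p - 2) / p ^ 2 := by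
    have := Real.log_le_sub_one_of_pos hxp0
    have he : x / p - 1 = (p - 2) / p ^ 2 := by
      rw [hxdef]; field_simp; ring
    linarith [he ▸ this]
  -- log 8 - log p ≤ 8/p - 1, i.e. 3 log 2 + 1 - 8/p ≤ log p
  have h2 : 3 * Real.log 2 + 1 - 8 / p ≤ Real.log p := by
    have h := Real.log_le_sub_one_of_pos (show (0:ℝ) < 8 / p by positivity)
    have he : Real.log (8 / p) = 3 * Real.log 2 - Real.log p := by
      rw [Real.log_div (by norm_num) hp0.ne', l8]
    rw [he] at h
    linarith
  -- rational inequality: (p-1)*(p-2)/p^2 + 8/p < 1 + log 2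
  have hrat : (p - 1) * ((p - 2) / p ^ 2) + 8 / p < 1 + Real.log 2 := by
    have hlog2 : (0.6931471803:ℝ) < Real.log 2 := Real.log_two_gt_d9
    have hkey : (5 * p + 2) / p ^ 2 < Real.log 2 := by
      rw [div_lt_iff₀ (by positivity)]
      nlinarith [sq_nonneg (p - 8)]
    have he : (p - 1) * ((p - 2) / p ^ 2) + 8 / p = (5 * p + 2) / p ^ 2 + 1 := by
      field_simp; ring
    linarith [he, hkey]
  -- (p-1) * log (x/p) ≤ (p-1)*(p-2)/p^2
  have h3 : (p - 1) * Real.log (x / p) ≤ (p - 1) * ((p - 2) / p ^ 2) :=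
    mul_le_mul_of_nonneg_left h1 (by linarith)
  -- log x = log (x/p) + log p
  have hxl : Real.log x = Real.log (x / p) + Real.log p := by
    rw [Real.log_div hx0.ne' hp0.ne']; ring
  -- key: (p-1) * log x + log 4 < p * log p
  have key : (p - 1) * Real.log x + Real.log 4 < p * Real.log p := by
    rw [hxl, l4]
    nlinarith [h3, h2, hrat]
  -- conclude
  rw [div_lt_one hp0]
  have e1 : x ^ (1 - 1 / p) = Real.exp (Real.log x * (1 - 1 / p)) :=
    Real.rpow_def_of_pos hx0 _
  have e2 : (4:ℝ) ^ (1 / p) = Real.exp (Real.log 4 * (1 / p)) :=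
    Real.rpow_def_of_pos (by norm_num) _
  rw [e1, e2, ← Real.exp_add]
  calc Real.exp (Real.log x * (1 - 1 / p) + Real.log 4 * (1 / p))
      < Real.exp (Real.log p) := by
        apply Real.exp_lt_exp.mpr
        have he : Real.log x * (1 - 1 / p) + Real.log 4 * (1 / p)
            = ((p - 1) * Real.log x + Real.log 4) / p := by
          field_simp
        rw [he, div_lt_iff₀ hp0]
        linarith [key]
    _ = p := Real.exp_log hp0
end

section
/- For every real p with 1 < p ≤ 8, at the point y = 1/2 the second derivative of L(y) = log(1 - y^{p+1} - (1-y)^{p+1}) - (1/p)(log y + log(1-y)) satisfies L''(1/2) = -p(p+1)·2^{2-p}/(1 - 2^{-p}) + 8/p < 0. -/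
open Real

lemma two_rpow_le_one_add (t : ℝ) (h0 : 0 ≤ t) (h1 : t ≤ 1) : (2:ℝ) ^ t ≤ 1 + t := by
  have h := Real.geom_mean_le_arith_mean2_weighted (by linarith : (0:ℝ) ≤ 1 - t) h0
    (by norm_num : (0:ℝ) ≤ 1) (by norm_num : (0:ℝ) ≤ 2) (by ring)
  rw [Real.one_rpow, one_mul] at h
  linarith

lemma chord (n : ℕ) (q : ℝ) (h0 : (n:ℝ) ≤ q) (h1 : q ≤ (n:ℝ) + 1) :
    (2:ℝ) ^ q ≤ (2:ℝ) ^ n * (q - n + 1) := by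
  have h := two_rpow_le_one_add (q - n) (by linarith) (by linarith)
  have e : (2:ℝ) ^ q = (2:ℝ) ^ n * 2 ^ (q - (n:ℝ)) := by
    rw [← Real.rpow_natCast 2 n, ← Real.rpow_add two_pos]; ring_nf
  rw [e]
  have hp2 : (0:ℝ) < (2:ℝ) ^ n := by positivity
  nlinarith

lemma key (p : ℝ) (hp1 : 1 < p) (hp8 : p ≤ 8) : (2:ℝ) ^ (p + 1) < p ^ 2 * (p + 1) + 2 := by
  rcases le_or_gt p 2 with h | h
  · have hc := chord 2 (p + 1) (by push_cast; linarith) (by push_cast; linarith)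
    norm_num at hc
    nlinarith [mul_pos (sub_pos.2 hp1) (by nlinarith : (0:ℝ) < p^2 + 2*p - 2)]
  rcases le_or_gt p 3 with h3 | h3
  · have hc := chord 3 (p + 1) (by push_cast; linarith) (by push_cast; linarith)
    norm_num at hc; nlinarith
  rcases le_or_gt p 4 with h4 | h4
  · have hc := chord 4 (p + 1) (by push_cast; linarith) (by push_cast; linarith)
    norm_num at hc; nlinarith
  rcases le_or_gt p 5 with h5 | h5
  · have hc := chord 5 (p + 1) (by push_cast; linarith) (by push_cast; linarith)
    norm_num at hc; nlinarith
  rcases le_or_gt p 6 with h6 | h6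
  · have hc := chord 6 (p + 1) (by push_cast; linarith) (by push_cast; linarith)
    norm_num at hc; nlinarith
  rcases le_or_gt p 7 with h7 | h7
  · have hc := chord 7 (p + 1) (by push_cast; linarith) (by push_cast; linarith)
    norm_num at hc; nlinarith
  · have hc := chord 8 (p + 1) (by push_cast; linarith) (by push_cast; linarith)
    norm_num at hc; nlinarith

theorem stmt12 (p : ℝ) (hp1 : 1 < p) (hp8 : p ≤ 8) :
    deriv (deriv (fun y : ℝ =>
        Real.log (1 - y ^ (p + 1) - (1 - y) ^ (p + 1)) -
          (1 / p) * (Real.log y + Real.log (1 - y)))) (1 / 2) =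
        -p * (p + 1) * 2 ^ (2 - p) / (1 - 2 ^ (-p)) + 8 / p ∧
      -p * (p + 1) * 2 ^ (2 - p) / (1 - 2 ^ (-p)) + 8 / p < 0 := by
  have hp0 : 0 < p := by linarith
  set E : ℝ := (2:ℝ) ^ p with hEdef
  have hEpos : 0 < E := Real.rpow_pos_of_pos two_pos p
  have hE1 : 1 < E := Real.one_lt_rpow_iff_of_pos two_pos |>.2 (Or.inl ⟨by norm_num, hp0⟩)
  have e4 : (2:ℝ) ^ (-p) = E⁻¹ := by
    rw [Real.rpow_neg (by norm_num : (0:ℝ) ≤ 2)]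
  have e3 : (2:ℝ) ^ (2 - p) = 4 / E := by
    rw [Real.rpow_sub two_pos, show ((2:ℝ)) = ((2:ℕ):ℝ) from by norm_num]
    rw [Real.rpow_natCast]
    norm_num [div_eq_div_iff]
    rw [hEdef]
  have e0 : ((1:ℝ)/2) ^ (p + 1) = (2*E)⁻¹ := by
    rw [show (1/2 : ℝ) = 2⁻¹ from by norm_num,
      Real.inv_rpow (by norm_num : (0:ℝ) ≤ 2), Real.rpow_add two_pos, Real.rpow_one]
    ring_nf
    rw [hEdef]
  have e1 : ((1:ℝ)/2) ^ p = E⁻¹ := by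
    rw [show (1/2 : ℝ) = 2⁻¹ from by norm_num,
      Real.inv_rpow (by norm_num : (0:ℝ) ≤ 2)]
  have e2 : ((1:ℝ)/2) ^ (p - 1) = 2 / E := by
    rw [show (1/2 : ℝ) = 2⁻¹ from by norm_num,
      Real.inv_rpow (by norm_num : (0:ℝ) ≤ 2), Real.rpow_sub two_pos, Real.rpow_one]
    field_simp
    exact hEdef
  have hkey : 2 * E < p ^ 2 * (p + 1) + 2 := by
    have := key p hp1 hp8
    rw [Real.rpow_add two_pos, Real.rpow_one] at this
    linarith
  have hEm1 : 0 < E - 1 := by linarith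
  have hDpos : 0 < 1 - E⁻¹ := by
    rw [sub_pos, inv_lt_one_iff₀]; right; exact hE1
  constructor
  · -- derivative computation
    have hD : ∀ y ∈ Set.Ioo (0:ℝ) 1,
        HasDerivAt (fun y : ℝ =>
            Real.log (1 - y ^ (p + 1) - (1 - y) ^ (p + 1)) -
              (1 / p) * (Real.log y + Real.log (1 - y)))
          ((fun y : ℝ => ((p+1)*(1-y)^p - (p+1)*y^p) / (1 - y^(p+1) - (1-y)^(p+1))
            - (1/p) * (y⁻¹ - (1-y)⁻¹)) y) y := by
      intro y hy
      have hy0 := hy.1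
      have hy1 : 0 < 1 - y := by linarith [hy.2]
      have hN : 0 < 1 - y^(p+1) - (1-y)^(p+1) := by
        have h1 : y^(p+1) < y := by
          have := Real.rpow_lt_rpow_of_exponent_gt hy.1 hy.2 (by linarith : (1:ℝ) < p+1)
          simpa using this
        have h2 : (1-y)^(p+1) < 1-y := by
          have := Real.rpow_lt_rpow_of_exponent_gt hy1 (by linarith [hy.1]) (by linarith : (1:ℝ) < p+1)
          simpa using this
        linarith
      have inner : HasDerivAt (fun y : ℝ => 1 - y) (-1) y := by
        simpa using (hasDerivAt_id y).const_sub 1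
      have h1 : HasDerivAt (fun y : ℝ => y^(p+1)) ((p+1)*y^p) y := by
        have := Real.hasDerivAt_rpow_const (x := y) (p := p+1) (Or.inr (by linarith))
        simpa using this
      have h2 : HasDerivAt (fun y : ℝ => (1-y)^(p+1)) (-((p+1)*(1-y)^p)) y := by
        have := (Real.hasDerivAt_rpow_const (x := 1-y) (p := p+1) (Or.inr (by linarith))).comp y inner
        exact this.congr_deriv (by simp)
      have hNd : HasDerivAt (fun y : ℝ => 1 - y^(p+1) - (1-y)^(p+1))
          ((p+1)*(1-y)^p - (p+1)*y^p) y := by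
        have := ((hasDerivAt_const y (1:ℝ)).sub h1).sub h2
        exact this.congr_deriv (by ring)
      have hlogN := hNd.log hN.ne'
      have hlogy := Real.hasDerivAt_log hy0.ne'
      have hlog1y : HasDerivAt (fun y : ℝ => Real.log (1-y)) ((-1)/(1-y)) y := inner.log hy1.ne'
      have := hlogN.sub ((hlogy.add hlog1y).const_mul (1/p))
      exact this.congr_deriv (by ring)
    have hEv : deriv (fun y : ℝ =>
        Real.log (1 - y ^ (p + 1) - (1 - y) ^ (p + 1)) -
          (1 / p) * (Real.log y + Real.log (1 - y)))
        =ᶠ[nhds (1/2 : ℝ)]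
        (fun y : ℝ => ((p+1)*(1-y)^p - (p+1)*y^p) / (1 - y^(p+1) - (1-y)^(p+1))
          - (1/p) * (y⁻¹ - (1-y)⁻¹)) := by
      filter_upwards [Ioo_mem_nhds (by norm_num : (0:ℝ) < 1/2) (by norm_num : (1/2:ℝ) < 1)]
        with y hy
      exact (hD y hy).deriv
    rw [hEv.deriv_eq]
    -- second derivative at 1/2
    have hc0 : (0:ℝ) < 1/2 := by norm_num
    have hc1 : (0:ℝ) < 1 - (1/2:ℝ) := by norm_num
    have innerc : HasDerivAt (fun y : ℝ => 1 - y) (-1) (1/2 : ℝ) := by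
      simpa using (hasDerivAt_id (1/2:ℝ)).const_sub 1
    have hMa : HasDerivAt (fun y : ℝ => y ^ p) (p * (1/2:ℝ) ^ (p-1)) (1/2 : ℝ) :=
      Real.hasDerivAt_rpow_const (Or.inr hp1.le)
    have hMb : HasDerivAt (fun y : ℝ => (1-y) ^ p) (-(p * (1 - (1/2:ℝ)) ^ (p-1))) (1/2 : ℝ) := by
      have := (Real.hasDerivAt_rpow_const (x := 1-(1/2:ℝ)) (p := p) (Or.inr hp1.le)).comp (1/2:ℝ) innerc
      exact this.congr_deriv (by simp)
    have hM : HasDerivAt (fun y : ℝ => (p+1)*(1-y)^p - (p+1)*y^p)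
        ((p+1) * -(p * (1 - (1/2:ℝ)) ^ (p-1)) - (p+1) * (p * (1/2:ℝ) ^ (p-1))) (1/2:ℝ) :=
      (hMb.const_mul (p+1)).sub (hMa.const_mul (p+1))
    have h1 : HasDerivAt (fun y : ℝ => y^(p+1)) ((p+1)*(1/2:ℝ)^p) (1/2:ℝ) := by
      have := Real.hasDerivAt_rpow_const (x := (1/2:ℝ)) (p := p+1) (Or.inr (by linarith))
      simpa using this
    have h2 : HasDerivAt (fun y : ℝ => (1-y)^(p+1)) (-((p+1)*(1-(1/2:ℝ))^p)) (1/2:ℝ) := by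
      have := (Real.hasDerivAt_rpow_const (x := 1-(1/2:ℝ)) (p := p+1) (Or.inr (by linarith))).comp (1/2:ℝ) innerc
      exact this.congr_deriv (by simp)
    have hNd : HasDerivAt (fun y : ℝ => 1 - y^(p+1) - (1-y)^(p+1))
        ((p+1)*(1-(1/2:ℝ))^p - (p+1)*(1/2:ℝ)^p) (1/2:ℝ) := by
      have := ((hasDerivAt_const (1/2:ℝ) (1:ℝ)).sub h1).sub h2
      exact this.congr_deriv (by ring)
    have hNval : (0:ℝ) < 1 - (1/2:ℝ)^(p+1) - (1-(1/2:ℝ))^(p+1) := by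
      rw [show (1 - (1/2:ℝ)) = 1/2 from by norm_num, e0, inv_eq_one_div]
      have h2E : (1:ℝ)/(2*E) < 1/2 := by
        apply one_div_lt_one_div_of_lt <;> [norm_num; linarith]
      linarith
    have hQ := hM.div hNd hNval.ne'
    have hInv1 : HasDerivAt (fun y : ℝ => y⁻¹) (-(((1/2:ℝ))^2)⁻¹) (1/2:ℝ) :=
      hasDerivAt_inv (by norm_num)
    have hInv2 : HasDerivAt (fun y : ℝ => (1-y)⁻¹) (-(-1) / (1-(1/2:ℝ))^2) (1/2:ℝ) :=
      innerc.inv (by norm_num)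
    have htot := hQ.sub ((hInv1.sub hInv2).const_mul (1/p))
    refine htot.deriv.trans ?_
    simp only [show (1:ℝ) - 1/2 = 1/2 from by norm_num, e0, e1, e2, e3, e4]
    have hN2 : (1 - (2*E)⁻¹ - (2*E)⁻¹ : ℝ) ≠ 0 := by
      rw [inv_eq_one_div]
      have h2E : (1:ℝ)/(2*E) < 1/2 := by
        apply one_div_lt_one_div_of_lt <;> [norm_num; linarith]
      intro hcon; linarith [hcon]
    have hE0 : E ≠ 0 := hEpos.ne'
    have hEm : E - 1 ≠ 0 := hEm1.ne'
    rw [show (1:ℝ) - (2*E)⁻¹ - (2*E)⁻¹ = (E-1)/E from by field_simp; ring,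
        show (1:ℝ) - E⁻¹ = (E-1)/E from by field_simp]
    field_simp
    ring
  · -- inequality
    rw [e3, e4]
    have heq : -p * (p + 1) * (4 / E) / (1 - E⁻¹) + 8 / p
        = (8 * (E - 1) - 4 * p^2 * (p+1)) / ((E - 1) * p) := by
      field_simp
      ring
    rw [heq]
    apply div_neg_of_neg_of_pos
    · nlinarith
    · positivity
end
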